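/- arXiv:2201.11918 — 2 statements merged into one kernel-verified Lean document; each statement's English description precedes it below -/
import Mathlib

section
/- Let i be a source of a Dynkin quiver Q on Δ. Then φ_{s_iQ} = (ŝ_i)^{−1} ∘ φ_Q as maps Δ̂₀ → Φ⁺×ℤ (the set Δ̂₀ is the same for Q and s_iQ, since the height functions of Q and s_iQ agree modulo 2). -/
noncomputable section

open scoped BigOperators

/-- A finite Cartan datum: a connected Dynkin diagram of finite type with vertex set `I`,
Cartan matrix `c`, symmetrizers `d`, simple roots `α`, fundamental weights `ϖ`, an invariant
symmetric bilinear form `form` (normalized so that `(α,α) = 2` for short roots, i.e. some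
`d i = 1`), simple reflections `s` acting on the weight lattice `V`, the set of positive
roots `Φ`, the longest element `w0` (with induced involution `star`), and Coxeter number
`hcox`. -/
structure SSDatum where
  I : Type
  [fintypeI : Fintype I]
  [decEqI : DecidableEq I]
  [nonemptyI : Nonempty I]
  V : Type
  [acgV : AddCommGroup V]
  [modV : Module ℚ V]
  [decEqV : DecidableEq V]
  c : I → I → ℤ
  d : I → ℤ
  α : I → V
  ϖ : I → V
  form : V → V → ℚ
  s : I → (V ≃ₗ[ℚ] V)
  Φ : Finset V
  w0 : V ≃ₗ[ℚ] V
  star : I → I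
  hcox : ℤ
  c_diag : ∀ i, c i i = 2
  c_nonpos : ∀ i j, i ≠ j → c i j ≤ 0
  c_zero_sym : ∀ i j, c i j = 0 → c j i = 0
  connected : ∀ i j, Relation.ReflTransGen (fun a b => a ≠ b ∧ c a b ≠ 0) i j
  d_pos : ∀ i, 0 < d i
  d_one : ∃ i, d i = 1
  d_symmetrize : ∀ i j, d i * c i j = d j * c j i
  exists_basis : ∃ b : Module.Basis I ℚ V, ∀ i, b i = ϖ i
  form_symm : ∀ x y, form x y = form y x
  form_add : ∀ x y z, form (x + y) z = form x z + form y z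
  form_smul : ∀ (a : ℚ) (x y), form (a • x) y = a * form x y
  form_alpha : ∀ i j, form (α i) (α j) = (d i : ℚ) * (c i j : ℚ)
  form_alpha_omega : ∀ i j, form (α i) (ϖ j) = if i = j then (d i : ℚ) else 0
  form_inv : ∀ i x y, form (s i x) (s i y) = form x y
  s_omega : ∀ i j, s i (ϖ j) = ϖ j - (if i = j then (1 : ℚ) else 0) • α i
  s_alpha : ∀ i j, s i (α j) = α j - ((c i j : ℚ)) • α i
  alpha_mem : ∀ i, α i ∈ Φ
  zero_not_mem : (0 : V) ∉ Φ
  pos_comb : ∀ β ∈ Φ, ∃ f : I → ℕ, β = ∑ i, (f i : ℚ) • α i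
  s_perm : ∀ i, ∀ β ∈ Φ, β ≠ α i → s i β ∈ Φ
  w0_mem : w0 ∈ Subgroup.closure (Set.range s)
  w0_alpha : ∀ i, w0 (α i) = - α (star i)
  star_invol : ∀ i, star (star i) = i
  w0_neg : ∀ β ∈ Φ, -(w0 β) ∈ Φ
  hcox_pos : 0 < hcox
  hcox_card : hcox * (Fintype.card I : ℤ) = 2 * (Φ.card : ℤ)

attribute [instance] SSDatum.fintypeI SSDatum.decEqI SSDatum.nonemptyI
attribute [instance] SSDatum.acgV SSDatum.modV SSDatum.decEqV

namespace SSDatum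

variable (D : SSDatum)

/-- The underlying graph of the Dynkin diagram. -/
def graph : SimpleGraph D.I where
  Adj a b := a ≠ b ∧ D.c a b ≠ 0
  symm := by
    constructor
    intro a b h
    exact ⟨h.1.symm, fun hz => h.2 (D.c_zero_sym b a hz)⟩
  loopless := by
    constructor
    intro a h
    exact h.1 rfl

/-- The graph distance `d(i,j)` in the Dynkin diagram. -/
def dist (i j : D.I) : ℕ := D.graph.dist i j

/-- The product `s_{i_1} ⋯ s_{i_r}` of simple reflections along a word. -/
def wordProd (l : List D.I) : D.V ≃ₗ[ℚ] D.V := (l.map D.s).prod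

/-- The length of an element of the Weyl group. -/
def len (w : D.V ≃ₗ[ℚ] D.V) : ℕ :=
  sInf {n | ∃ l : List D.I, l.length = n ∧ D.wordProd l = w}

/-- A word is a reduced expression of its product. -/
def IsReducedWord (l : List D.I) : Prop := l.length = D.len (D.wordProd l)

/-- The map `ŵ` on `Φ⁺ × ℤ`:
`ŵ(β,k) = (wβ, k)` if `wβ ∈ Φ⁺` and `ŵ(β,k) = (−wβ, k−1)` otherwise. -/
def hat (w : D.V ≃ₗ[ℚ] D.V) (x : D.V × ℤ) : D.V × ℤ :=
  if w x.1 ∈ D.Φ then (w x.1, x.2) else (-(w x.1), x.2 - 1)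

/-- The map `(ŵ)⁻¹` on `Φ⁺ × ℤ`. -/
def hatInv (w : D.V ≃ₗ[ℚ] D.V) (x : D.V × ℤ) : D.V × ℤ :=
  if w⁻¹ x.1 ∈ D.Φ then (w⁻¹ x.1, x.2) else (-(w⁻¹ x.1), x.2 + 1)

/-- `ξ` is a height function on the Dynkin diagram. -/
def IsHeight (ξ : D.I → ℤ) : Prop :=
  ∀ i j, D.dist i j = 1 → ξ i - ξ j = 1 ∨ ξ j - ξ i = 1

/-- `i` is a source of the Dynkin quiver `(Δ, ξ)`. -/
def IsSource (ξ : D.I → ℤ) (i : D.I) : Prop :=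
  ∀ j, D.dist i j = 1 → ξ j < ξ i

/-- The height function of the reflected quiver `s_i Q`. -/
def rHeight (ξ : D.I → ℤ) (i : D.I) : D.I → ℤ :=
  fun j => if j = i then ξ i - 2 else ξ j

/-- A sequence in `I` is adapted to the Dynkin quiver `(Δ, ξ)`. -/
def Adapted (ξ : D.I → ℤ) : List D.I → Prop
  | [] => True
  | i :: l => D.IsSource ξ i ∧ Adapted (D.rHeight ξ i) l

/-- `τ` is the Coxeter element `τ_Q` attached to the Dynkin quiver with height function `ξ`:
it has a `Q`-adapted reduced expression in which each simple reflection occurs exactly once. -/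
def IsCoxeterFor (ξ : D.I → ℤ) (τ : D.V ≃ₗ[ℚ] D.V) : Prop :=
  ∃ l : List D.I, l.Nodup ∧ (∀ i, i ∈ l) ∧ D.Adapted ξ l ∧ D.wordProd l = τ

/-- `γ_i^Q = (1 - τ_Q) ϖ_i`. -/
def gam (τ : D.V ≃ₗ[ℚ] D.V) (i : D.I) : D.V := D.ϖ i - τ (D.ϖ i)

/-- The map `φ_Q : Δ̂₀ → Φ⁺ × ℤ`, defined inductively from
`φ_Q(i, ξ_i) = (γ_i^Q, 0)` by applying `(τ̂_Q)^{∓1}` when moving `p ↦ p ± 2`. -/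
def phi (ξ : D.I → ℤ) (τ : D.V ≃ₗ[ℚ] D.V) (i : D.I) (p : ℤ) : D.V × ℤ :=
  if p ≤ ξ i then (D.hat τ)^[((ξ i - p) / 2).toNat] (D.gam τ i, 0)
  else (D.hatInv τ)^[((p - ξ i) / 2).toNat] (D.gam τ i, 0)

/-- The function `η_{i,j}^Q : ℤ → ℚ`. -/
def eta (ξ : D.I → ℤ) (τ : D.V ≃ₗ[ℚ] D.V) (i j : D.I) (u : ℤ) : ℚ :=
  if (u + ξ j - ξ i - 1) % 2 = 0 then
    D.form (D.ϖ i) ((τ ^ ((u + ξ j - ξ i - 1) / 2)) (D.gam τ j))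
  else 0

end SSDatum

/-- The variable `t` of the field of formal Laurent series `ℚ((t))`. -/
def tq : LaurentSeries ℚ := HahnSeries.single 1 1

namespace SSDatum

variable (D : SSDatum)

/-- The symmetrized `t`-quantized Cartan matrix `B(t) = C(t) · D⁻¹`, where
`C(t)_{i,i} = t + t⁻¹` and `C(t)_{i,j} = c_{i,j}` for `i ≠ j`. -/
def Bt : Matrix D.I D.I (LaurentSeries ℚ) :=
  Matrix.of fun i j =>
    (if i = j then tq + tq⁻¹ else (D.c i j : LaurentSeries ℚ)) * ((D.d j : LaurentSeries ℚ))⁻¹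

/-- `b̃_{i,j}(u)`: the coefficient of `t^u` in the Laurent expansion of `(B(t)⁻¹)_{i,j}`. -/
def btilde (i j : D.I) (u : ℤ) : ℚ := ((D.Bt)⁻¹ i j).coeff u

/-- `Ñ(i,p;j,s) = b̃_{i,j}(p−s−1) − b̃_{i,j}(s−p−1) − b̃_{i,j}(p−s+1) + b̃_{i,j}(s−p+1)`. -/
def Ncal (i : D.I) (p : ℤ) (j : D.I) (q : ℤ) : ℚ :=
  D.btilde i j (p - q - 1) - D.btilde i j (q - p - 1)
    - D.btilde i j (p - q + 1) + D.btilde i j (q - p + 1)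

end SSDatum

namespace SSDatum

variable (D : SSDatum)

/-! ### Basic word product lemmas -/

lemma wp_nil : D.wordProd [] = 1 := rfl

lemma mulApp (f g : D.V ≃ₗ[ℚ] D.V) (x : D.V) : (f * g) x = f (g x) := rfl

lemma wp_cons (a : D.I) (l : List D.I) :
    D.wordProd (a :: l) = D.s a * D.wordProd l := by
  simp [wordProd]

lemma wp_append (l m : List D.I) :
    D.wordProd (l ++ m) = D.wordProd l * D.wordProd m := by
  simp [wordProd]

lemma s_s (k : D.I) (x : D.V) : D.s k (D.s k x) = x := by
  obtain ⟨b, hb⟩ := D.exists_basis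
  have h : ((D.s k).toLinearMap.comp (D.s k).toLinearMap) = LinearMap.id := by
    apply b.ext
    intro j
    have hck : D.c k k = 2 := D.c_diag k
    simp only [LinearMap.comp_apply, LinearEquiv.coe_coe, LinearMap.id_apply, hb]
    by_cases hkj : k = j
    · subst hkj
      rw [D.s_omega, if_pos rfl, one_smul, map_sub, D.s_omega, if_pos rfl, one_smul,
        D.s_alpha, hck]
      push_cast
      module
    · simp [D.s_omega, hkj]
  have := congrArg (fun f => f x) h
  simpa using this

lemma s_mul_s (k : D.I) : D.s k * D.s k = 1 := by
  ext x
  exact D.s_s k x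

lemma s_inv (k : D.I) : (D.s k)⁻¹ = D.s k :=
  inv_eq_of_mul_eq_one_left (D.s_mul_s k)

lemma wp_reverse (l : List D.I) : D.wordProd l.reverse = (D.wordProd l)⁻¹ := by
  induction l with
  | nil => simp [wp_nil]
  | cons a t ih =>
    rw [List.reverse_cons, wp_append, wp_cons, ih, wp_cons, wp_nil, mul_one,
      mul_inv_rev, s_inv]

lemma s_comm (a b : D.I) (hab : D.c a b = 0) : D.s a * D.s b = D.s b * D.s a := by
  rcases eq_or_ne a b with rfl | hne
  · rfl
  have hba : D.c b a = 0 := D.c_zero_sym a b hab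
  obtain ⟨bas, hb⟩ := D.exists_basis
  apply LinearEquiv.toLinearMap_injective
  apply bas.ext
  intro j
  have h1 : D.s a (D.α b) = D.α b := by rw [D.s_alpha, hab]; simp
  have h2 : D.s b (D.α a) = D.α a := by rw [D.s_alpha, hba]; simp
  show D.s a (D.s b (bas j)) = D.s b (D.s a (bas j))
  rw [hb]
  by_cases hbj : b = j <;> by_cases haj : a = j
  · exact absurd (haj.trans hbj.symm) hne
  · subst hbj
    simp [D.s_omega, haj, map_sub, h1]
  · subst haj
    simp [D.s_omega, hbj, map_sub, h2]
  · simp [D.s_omega, haj, hbj]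

lemma invApp (f : D.V ≃ₗ[ℚ] D.V) (x : D.V) : f⁻¹ (f x) = x :=
  f.symm_apply_apply x

lemma appInv (f : D.V ≃ₗ[ℚ] D.V) (x : D.V) : f (f⁻¹ x) = x :=
  f.apply_symm_apply x

/-! ### The linear functional `cf j` and positivity of roots -/

/-- The functional `x ↦ (x, ϖ_j)`. -/
def cf (j : D.I) : D.V →ₗ[ℚ] ℚ where
  toFun x := D.form x (D.ϖ j)
  map_add' x y := D.form_add x y (D.ϖ j)
  map_smul' a x := D.form_smul a x (D.ϖ j)

lemma cf_apply (j : D.I) (x : D.V) : D.cf j x = D.form x (D.ϖ j) := rfl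

lemma cf_alpha (j k : D.I) : D.cf j (D.α k) = if k = j then (D.d k : ℚ) else 0 :=
  D.form_alpha_omega k j

lemma cf_comb (j : D.I) (f : D.I → ℕ) :
    D.cf j (∑ k, (f k : ℚ) • D.α k) = (f j : ℚ) * (D.d j : ℚ) := by
  rw [map_sum]
  simp only [map_smul, cf_alpha, smul_eq_mul]
  rw [Finset.sum_eq_single j]
  · simp
  · intro k _ hk
    simp [hk]
  · intro h
    exact absurd (Finset.mem_univ j) h

lemma cf_nonneg (j : D.I) {β : D.V} (hβ : β ∈ D.Φ) : 0 ≤ D.cf j β := by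
  obtain ⟨f, hf⟩ := D.pos_comb β hβ
  rw [hf, cf_comb]
  have hd : (0:ℚ) ≤ (D.d j : ℚ) := by exact_mod_cast (D.d_pos j).le
  exact mul_nonneg (by positivity) hd

lemma not_neg_mem {β : D.V} (hβ : β ∈ D.Φ) : -β ∉ D.Φ := by
  intro hneg
  obtain ⟨f, hf⟩ := D.pos_comb β hβ
  have hz : ∀ j, (f j : ℚ) = 0 := by
    intro j
    have h1 : 0 ≤ D.cf j β := D.cf_nonneg j hβ
    have h2 : 0 ≤ D.cf j (-β) := D.cf_nonneg j hneg
    rw [map_neg] at h2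
    have h3 : D.cf j β = 0 := le_antisymm (by linarith) h1
    rw [hf, cf_comb] at h3
    have hd : (0:ℚ) < (D.d j : ℚ) := by exact_mod_cast D.d_pos j
    rcases mul_eq_zero.mp h3 with h | h
    · exact h
    · exact absurd h (ne_of_gt hd)
  have : β = 0 := by
    rw [hf]
    apply Finset.sum_eq_zero
    intro k _
    rw [hz k, zero_smul]
  exact D.zero_not_mem (this ▸ hβ)

/-! ### The root system `R = Φ ∪ -Φ` -/

/-- `x` is a root (positive or negative). -/
def InR (x : D.V) : Prop := x ∈ D.Φ ∨ -x ∈ D.Φ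

lemma inR_alpha (k : D.I) : D.InR (D.α k) := Or.inl (D.alpha_mem k)

lemma s_alpha_self (k : D.I) : D.s k (D.α k) = -(D.α k) := by
  rw [D.s_alpha, D.c_diag]
  push_cast
  module

lemma s_inR (k : D.I) {x : D.V} (h : D.InR x) : D.InR (D.s k x) := by
  rcases h with h | h
  · by_cases hx : x = D.α k
    · subst hx
      rw [s_alpha_self]
      exact Or.inr (by simpa using D.alpha_mem k)
    · exact Or.inl (D.s_perm k x h hx)
  · by_cases hx : -x = D.α k
    · have : x = -(D.α k) := by rw [← hx]; simp
      subst this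
      rw [map_neg, s_alpha_self]
      exact Or.inl (by simpa using D.alpha_mem k)
    · have : D.s k (-x) ∈ D.Φ := D.s_perm k (-x) h hx
      rw [map_neg] at this
      exact Or.inr (by simpa using this)

lemma wp_inR (l : List D.I) {x : D.V} (h : D.InR x) : D.InR (D.wordProd l x) := by
  induction l generalizing x with
  | nil => simpa [wp_nil] using h
  | cons a t ih =>
    rw [wp_cons, mulApp D]
    exact D.s_inR a (ih h)

lemma mem_of_inR_cf_pos {x : D.V} (h : D.InR x) {j : D.I} (hc : 0 < D.cf j x) :
    x ∈ D.Φ := by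
  rcases h with h | h
  · exact h
  · exfalso
    have := D.cf_nonneg j h
    rw [map_neg] at this
    linarith

lemma cf_s (k j : D.I) (h : k ≠ j) (x : D.V) : D.cf j (D.s k x) = D.cf j x := by
  rw [cf_apply, cf_apply]
  conv_lhs => rw [← D.s_s k (D.ϖ j)]
  rw [D.form_inv]
  rw [D.s_omega, if_neg h, zero_smul, sub_zero]

lemma cf_wp (l : List D.I) (j : D.I) (h : j ∉ l) (x : D.V) :
    D.cf j (D.wordProd l x) = D.cf j x := by
  induction l generalizing x with
  | nil => simp [wp_nil]
  | cons a t ih =>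
    rw [wp_cons, mulApp D]
    have ha : a ≠ j := fun hh => h (hh ▸ List.mem_cons_self)
    have ht : j ∉ t := fun hh => h (List.mem_cons_of_mem a hh)
    rw [D.cf_s a j ha, ih ht]

lemma wp_alpha_mem (l : List D.I) (j : D.I) (h : j ∉ l) :
    D.wordProd l (D.α j) ∈ D.Φ := by
  apply D.mem_of_inR_cf_pos (D.wp_inR l (D.inR_alpha j)) (j := j)
  rw [D.cf_wp l j h, cf_alpha, if_pos rfl]
  exact_mod_cast D.d_pos j

lemma wp_fix (l : List D.I) (j : D.I) (h : j ∉ l) :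
    D.wordProd l (D.ϖ j) = D.ϖ j := by
  induction l with
  | nil => simp [wp_nil]
  | cons a t ih =>
    have ha : a ≠ j := fun hh => h (hh ▸ List.mem_cons_self)
    have ht : j ∉ t := fun hh => h (List.mem_cons_of_mem a hh)
    rw [wp_cons, mulApp D, ih ht, D.s_omega, if_neg ha, zero_smul,
      sub_zero]

end SSDatum
namespace SSDatum

variable (D : SSDatum)

/-! ### Quiver combinatorics -/

lemma source_not_adj {ξ : D.I → ℤ} {i k : D.I} (hi : D.IsSource ξ i)
    (hk : D.IsSource ξ k) (hne : i ≠ k) : D.c i k = 0 := by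
  by_contra hc
  have hadj : D.graph.Adj i k := ⟨hne, hc⟩
  have h1 : D.dist i k = 1 := SimpleGraph.dist_eq_one_iff_adj.mpr hadj
  have h2 : D.dist k i = 1 := SimpleGraph.dist_eq_one_iff_adj.mpr hadj.symm
  have := hi k h1
  have := hk i h2
  omega

lemma rHeight_eq (ξ : D.I → ℤ) (a j : D.I) :
    D.rHeight ξ a j = ξ j - if j = a then 2 else 0 := by
  show (if j = a then ξ a - 2 else ξ j) = _
  by_cases h : j = a
  · rw [if_pos h, if_pos h, h]
  · rw [if_neg h, if_neg h]; ring

lemma source_rHeight {ξ : D.I → ℤ} {i : D.I} (k : D.I) (hi : D.IsSource ξ i)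
    (hne : i ≠ k) : D.IsSource (D.rHeight ξ k) i := by
  intro j hj
  have h1 := hi j hj
  rw [D.rHeight_eq, D.rHeight_eq, if_neg hne]
  by_cases hjk : j = k
  · rw [if_pos hjk]; omega
  · rw [if_neg hjk]; omega

lemma rHeight_comm (ξ : D.I → ℤ) (a b : D.I) :
    D.rHeight (D.rHeight ξ a) b = D.rHeight (D.rHeight ξ b) a := by
  funext j
  simp only [rHeight_eq]
  ring

lemma erase_lemma : ∀ (l : List D.I) (ξ : D.I → ℤ), D.Adapted ξ l →
    ∀ i, i ∈ l → D.IsSource ξ i →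
    D.wordProd l = D.s i * D.wordProd (l.erase i) ∧
      D.Adapted (D.rHeight ξ i) (l.erase i) := by
  intro l
  induction l with
  | nil => intro ξ _ i hi; simp at hi
  | cons a t ih =>
    intro ξ hadapt i hi hsrc
    obtain ⟨ha, ht⟩ := hadapt
    by_cases hia : a = i
    · subst hia
      rw [List.erase_cons_head]
      exact ⟨D.wp_cons a t, ht⟩
    · have hit : i ∈ t := by
        rcases List.mem_cons.mp hi with h | h
        · exact absurd h.symm hia
        · exact h
      have hne : i ≠ a := fun h => hia h.symm
      have hcia : D.c i a = 0 := D.source_not_adj hsrc ha hne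
      have hsrc' : D.IsSource (D.rHeight ξ a) i := D.source_rHeight a hsrc hne
      obtain ⟨hw, hada⟩ := ih (D.rHeight ξ a) ht i hit hsrc'
      constructor
      · rw [List.erase_cons_tail (by simpa using hia)]
        rw [D.wp_cons, hw, D.wp_cons, ← mul_assoc, ← mul_assoc,
          D.s_comm a i (D.c_zero_sym i a hcia)]
      · rw [List.erase_cons_tail (by simpa using hia)]
        refine ⟨D.source_rHeight i ha (fun h => hia h), ?_⟩
        rw [← D.rHeight_comm]
        exact hada

lemma adapted_perm : ∀ (l2 l1 : List D.I) (ξ : D.I → ℤ), l1.Perm l2 →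
    D.Adapted ξ l1 → D.Adapted ξ l2 → D.wordProd l1 = D.wordProd l2 := by
  intro l2
  induction l2 with
  | nil => intro l1 ξ hperm _ _; rw [List.Perm.eq_nil hperm]
  | cons a t ih =>
    intro l1 ξ hperm had1 had2
    obtain ⟨ha, ht⟩ := had2
    have hal1 : a ∈ l1 := hperm.mem_iff.mpr (List.mem_cons_self)
    obtain ⟨hw, hada⟩ := D.erase_lemma l1 ξ had1 a hal1 ha
    have hperm' : (l1.erase a).Perm t := by
      have := hperm.erase a
      simpa using this
    rw [hw, D.wp_cons, ih (l1.erase a) (D.rHeight ξ a) hperm' hada ht]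

/-- Iterated reflection of a height function along a word. -/
def rHs (ξ : D.I → ℤ) : List D.I → (D.I → ℤ)
  | [] => ξ
  | a :: t => rHs (D.rHeight ξ a) t

lemma adapted_append : ∀ (l m : List D.I) (ξ : D.I → ℤ),
    D.Adapted ξ (l ++ m) ↔ D.Adapted ξ l ∧ D.Adapted (D.rHs ξ l) m := by
  intro l
  induction l with
  | nil => intro m ξ; simp [Adapted, rHs]
  | cons a t ih =>
    intro m ξ
    show (D.IsSource ξ a ∧ D.Adapted (D.rHeight ξ a) (t ++ m)) ↔ _
    rw [ih]
    show _ ↔ (D.IsSource ξ a ∧ D.Adapted (D.rHeight ξ a) t) ∧ _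
    have : D.rHs ξ (a :: t) = D.rHs (D.rHeight ξ a) t := rfl
    rw [this]
    tauto

lemma rHs_count : ∀ (l : List D.I) (ξ : D.I → ℤ) (j : D.I),
    D.rHs ξ l j = ξ j - 2 * l.count j := by
  intro l
  induction l with
  | nil => intro ξ j; simp [rHs]
  | cons a t ih =>
    intro ξ j
    show D.rHs (D.rHeight ξ a) t j = _
    rw [ih, rHeight_eq, List.count_cons]
    by_cases h : j = a
    · rw [if_pos h]
      simp [h]
      ring
    · rw [if_neg h]
      simp [h, Ne.symm h]

/-! ### `γ_j` is a positive root -/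

lemma gam_eq_wp {τ₀ : D.V ≃ₗ[ℚ] D.V} {l1 l2 : List D.I} {j : D.I}
    (hj1 : j ∉ l1) (hj2 : j ∉ l2) (hτ : D.wordProd (l1 ++ j :: l2) = τ₀) :
    D.gam τ₀ j = D.wordProd l1 (D.α j) := by
  have : τ₀ (D.ϖ j) = D.ϖ j - D.wordProd l1 (D.α j) := by
    rw [← hτ, D.wp_append, D.wp_cons, mulApp, mulApp, D.wp_fix l2 j hj2,
      D.s_omega, if_pos rfl, one_smul, map_sub, D.wp_fix l1 j hj1]
  rw [gam, this]
  abel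

lemma gam_mem {ξ₀ : D.I → ℤ} {τ₀ : D.V ≃ₗ[ℚ] D.V} (h : D.IsCoxeterFor ξ₀ τ₀)
    (j : D.I) : D.gam τ₀ j ∈ D.Φ := by
  obtain ⟨l, hnodup, hfull, _, hprod⟩ := h
  obtain ⟨l1, l2, rfl⟩ := List.append_of_mem (hfull j)
  have hnd := hnodup
  rw [List.nodup_append] at hnd
  have hj1 : j ∉ l1 := fun hh => (hnd.2.2 j hh j List.mem_cons_self) rfl
  have hj2 : j ∉ l2 := (List.nodup_cons.mp hnd.2.1).1
  rw [D.gam_eq_wp hj1 hj2 hprod]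
  exact D.wp_alpha_mem l1 j hj1

end SSDatum
namespace SSDatum

variable (D : SSDatum)

/-! ### `hat` and `hatInv` lemmas -/

lemma neg_mem_of_inR {y : D.V} (h : D.InR y) (hy : y ∉ D.Φ) : -y ∈ D.Φ := by
  rcases h with h | h
  · exact absurd h hy
  · exact h

lemma hatInv_s_apply (i : D.I) (x : D.V × ℤ) :
    D.hatInv (D.s i) x =
      if D.s i x.1 ∈ D.Φ then (D.s i x.1, x.2) else (-(D.s i x.1), x.2 + 1) := by
  rw [hatInv, s_inv]

lemma hat_fst_mem {w : D.V ≃ₗ[ℚ] D.V} (hR : ∀ y, D.InR y → D.InR (w y))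
    {x : D.V × ℤ} (hx : x.1 ∈ D.Φ) : (D.hat w x).1 ∈ D.Φ := by
  rw [hat]
  by_cases h : w x.1 ∈ D.Φ
  · rw [if_pos h]; exact h
  · rw [if_neg h]; exact D.neg_mem_of_inR (hR x.1 (Or.inl hx)) h

lemma hatInv_fst_mem {w : D.V ≃ₗ[ℚ] D.V} (hR : ∀ y, D.InR y → D.InR (w⁻¹ y))
    {x : D.V × ℤ} (hx : x.1 ∈ D.Φ) : (D.hatInv w x).1 ∈ D.Φ := by
  rw [hatInv]
  by_cases h : w⁻¹ x.1 ∈ D.Φ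
  · rw [if_pos h]; exact h
  · rw [if_neg h]; exact D.neg_mem_of_inR (hR x.1 (Or.inl hx)) h

lemma hat_iter_fst_mem {w : D.V ≃ₗ[ℚ] D.V} (hR : ∀ y, D.InR y → D.InR (w y))
    (n : ℕ) {x : D.V × ℤ} (hx : x.1 ∈ D.Φ) : ((D.hat w)^[n] x).1 ∈ D.Φ := by
  induction n generalizing x with
  | zero => exact hx
  | succ n ih =>
    rw [Function.iterate_succ_apply]
    exact ih (D.hat_fst_mem hR hx)

lemma hatInv_iter_fst_mem {w : D.V ≃ₗ[ℚ] D.V} (hR : ∀ y, D.InR y → D.InR (w⁻¹ y))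
    (n : ℕ) {x : D.V × ℤ} (hx : x.1 ∈ D.Φ) : ((D.hatInv w)^[n] x).1 ∈ D.Φ := by
  induction n generalizing x with
  | zero => exact hx
  | succ n ih =>
    rw [Function.iterate_succ_apply]
    exact ih (D.hatInv_fst_mem hR hx)


lemma hat_eq_pos (w : D.V ≃ₗ[ℚ] D.V) (y : D.V) (v : ℤ) (h : w y ∈ D.Φ) :
    D.hat w (y, v) = (w y, v) := by
  rw [hat]; simp only; rw [if_pos h]

lemma hat_eq_neg (w : D.V ≃ₗ[ℚ] D.V) (y : D.V) (v : ℤ) (h : w y ∉ D.Φ) :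
    D.hat w (y, v) = (-(w y), v - 1) := by
  rw [hat]; simp only; rw [if_neg h]

lemma hatInv_eq_pos (w : D.V ≃ₗ[ℚ] D.V) (y : D.V) (v : ℤ) (h : w⁻¹ y ∈ D.Φ) :
    D.hatInv w (y, v) = (w⁻¹ y, v) := by
  rw [hatInv]; simp only; rw [if_pos h]

lemma hatInv_eq_neg (w : D.V ≃ₗ[ℚ] D.V) (y : D.V) (v : ℤ) (h : w⁻¹ y ∉ D.Φ) :
    D.hatInv w (y, v) = (-(w⁻¹ y), v + 1) := by
  rw [hatInv]; simp only; rw [if_neg h]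

lemma hatInv_s_pos (i : D.I) (y : D.V) (v : ℤ) (h : D.s i y ∈ D.Φ) :
    D.hatInv (D.s i) (y, v) = (D.s i y, v) := by
  rw [hatInv_s_apply]; simp only; rw [if_pos h]

lemma hatInv_s_neg (i : D.I) (y : D.V) (v : ℤ) (h : D.s i y ∉ D.Φ) :
    D.hatInv (D.s i) (y, v) = (-(D.s i y), v + 1) := by
  rw [hatInv_s_apply]; simp only; rw [if_neg h]

section Comm

variable (i : D.I) (τ τ' : D.V ≃ₗ[ℚ] D.V)
variable (hts : ∀ y, τ' (D.s i y) = D.s i (τ y))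
variable (hts' : ∀ y, τ'⁻¹ (D.s i y) = D.s i (τ⁻¹ y))
variable (hRτ : ∀ y, D.InR y → D.InR (τ y))
variable (hRτi : ∀ y, D.InR y → D.InR (τ⁻¹ y))
variable (E1 : ∀ β ∈ D.Φ, τ β ∈ D.Φ → D.s i (τ β) ∈ D.Φ)
variable (E2 : ∀ β ∈ D.Φ, D.s i β ∉ D.Φ → D.s i (τ β) ∈ D.Φ)
variable (E3 : ∀ β ∈ D.Φ, τ⁻¹ β ∈ D.Φ → D.s i β ∈ D.Φ)
variable (E4 : ∀ β ∈ D.Φ, D.s i β ∈ D.Φ → D.s i (τ⁻¹ β) ∈ D.Φ → τ⁻¹ β ∈ D.Φ)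

include hts hRτ E1 E2 in
lemma comm_hat (x : D.V × ℤ) (hx : x.1 ∈ D.Φ) :
    D.hatInv (D.s i) (D.hat τ x) = D.hat τ' (D.hatInv (D.s i) x) := by
  obtain ⟨β, u⟩ := x
  simp only at hx
  by_cases hc : D.s i (τ β) ∈ D.Φ
  · have lhs : D.hatInv (D.s i) (D.hat τ (β, u)) = (D.s i (τ β), u) := by
      by_cases ha : τ β ∈ D.Φ
      · rw [D.hat_eq_pos τ β u ha, D.hatInv_s_pos i _ u hc]
      · rw [D.hat_eq_neg τ β u ha, D.hatInv_s_neg i _ (u - 1)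
          (by rw [map_neg]; exact fun h => D.not_neg_mem hc h)]
        rw [map_neg, neg_neg]
        norm_num
    rw [lhs]
    by_cases hb : D.s i β ∈ D.Φ
    · rw [D.hatInv_s_pos i β u hb, D.hat_eq_pos τ' _ u (by rw [hts]; exact hc), hts]
    · rw [D.hatInv_s_neg i β u hb, D.hat_eq_neg τ' _ (u + 1)
        (by rw [map_neg, hts]; exact fun h => D.not_neg_mem hc h)]
      rw [map_neg, hts, neg_neg]
      norm_num
  · have ha : τ β ∉ D.Φ := fun h => hc (E1 β hx h)
    have hb : D.s i β ∈ D.Φ := by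
      by_contra hb
      exact hc (E2 β hx hb)
    have hmem : -(D.s i (τ β)) ∈ D.Φ :=
      D.neg_mem_of_inR (D.s_inR i (hRτ β (Or.inl hx))) hc
    rw [D.hat_eq_neg τ β u ha, D.hatInv_s_pos i _ (u - 1) (by rw [map_neg]; exact hmem),
      D.hatInv_s_pos i β u hb, D.hat_eq_neg τ' _ u (by rw [hts]; exact hc), hts, map_neg]

include hts' hRτi E3 E4 in
lemma comm_hatInv (x : D.V × ℤ) (hx : x.1 ∈ D.Φ) :
    D.hatInv (D.s i) (D.hatInv τ x) = D.hatInv τ' (D.hatInv (D.s i) x) := by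
  obtain ⟨β, u⟩ := x
  simp only at hx
  by_cases hc : D.s i (τ⁻¹ β) ∈ D.Φ
  · have hab : τ⁻¹ β ∈ D.Φ ↔ D.s i β ∈ D.Φ :=
      ⟨fun h => E3 β hx h, fun h => E4 β hx h hc⟩
    by_cases ha : τ⁻¹ β ∈ D.Φ
    · have hb : D.s i β ∈ D.Φ := hab.mp ha
      rw [D.hatInv_eq_pos τ β u ha, D.hatInv_s_pos i _ u hc,
        D.hatInv_s_pos i β u hb, D.hatInv_eq_pos τ' _ u (by rw [hts']; exact hc), hts']
    · have hb : D.s i β ∉ D.Φ := fun h => ha (hab.mpr h)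
      rw [D.hatInv_eq_neg τ β u ha, D.hatInv_s_neg i _ (u + 1)
          (by rw [map_neg]; exact fun h => D.not_neg_mem hc h),
        D.hatInv_s_neg i β u hb, D.hatInv_eq_neg τ' _ (u + 1)
          (by rw [map_neg, hts']; exact fun h => D.not_neg_mem hc h)]
      simp only [map_neg, hts', neg_neg]
  · have hmem : -(D.s i (τ⁻¹ β)) ∈ D.Φ :=
      D.neg_mem_of_inR (D.s_inR i (hRτi β (Or.inl hx))) hc
    have lhs : D.hatInv (D.s i) (D.hatInv τ (β, u)) = (-(D.s i (τ⁻¹ β)), u + 1) := by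
      by_cases ha : τ⁻¹ β ∈ D.Φ
      · rw [D.hatInv_eq_pos τ β u ha, D.hatInv_s_neg i _ u hc]
      · rw [D.hatInv_eq_neg τ β u ha, D.hatInv_s_pos i _ (u + 1)
          (by rw [map_neg]; exact hmem), map_neg]
    rw [lhs]
    by_cases hb : D.s i β ∈ D.Φ
    · rw [D.hatInv_s_pos i β u hb, D.hatInv_eq_neg τ' _ u (by rw [hts']; exact hc), hts']
    · rw [D.hatInv_s_neg i β u hb, D.hatInv_eq_pos τ' _ (u + 1)
        (by rw [map_neg, hts']; exact hmem), map_neg, hts']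

include hts hRτ E1 E2 in
lemma comm_hat_iter (n : ℕ) (x : D.V × ℤ) (hx : x.1 ∈ D.Φ) :
    D.hatInv (D.s i) ((D.hat τ)^[n] x) = (D.hat τ')^[n] (D.hatInv (D.s i) x) := by
  induction n generalizing x with
  | zero => rfl
  | succ n ih =>
    rw [Function.iterate_succ_apply, Function.iterate_succ_apply,
      ih (D.hat τ x) (D.hat_fst_mem hRτ hx),
      D.comm_hat i τ τ' hts hRτ E1 E2 x hx]

include hts' hRτi E3 E4 in
lemma comm_hatInv_iter (n : ℕ) (x : D.V × ℤ) (hx : x.1 ∈ D.Φ) :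
    D.hatInv (D.s i) ((D.hatInv τ)^[n] x) = (D.hatInv τ')^[n] (D.hatInv (D.s i) x) := by
  induction n generalizing x with
  | zero => rfl
  | succ n ih =>
    rw [Function.iterate_succ_apply, Function.iterate_succ_apply,
      ih (D.hatInv τ x) (D.hatInv_fst_mem hRτi hx),
      D.comm_hatInv i τ τ' hts' hRτi E3 E4 x hx]

end Comm

end SSDatum
namespace SSDatum

theorem stmt3_aux (D : SSDatum) (ξ : D.I → ℤ) (hξ : D.IsHeight ξ)
    (i : D.I) (hi : D.IsSource ξ i)
    (τ τ' : D.V ≃ₗ[ℚ] D.V)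
    (hτ : D.IsCoxeterFor ξ τ) (hτ' : D.IsCoxeterFor (D.rHeight ξ i) τ') :
    ∀ (j : D.I) (p : ℤ), 2 ∣ (p - ξ j) →
      D.phi (D.rHeight ξ i) τ' j p = D.hatInv (D.s i) (D.phi ξ τ j p) := by
  classical
  obtain ⟨l, hnd, hfull, hadapt, hprod⟩ := id hτ
  obtain ⟨hw, hada⟩ := D.erase_lemma l ξ hadapt i (hfull i) hi
  have hτeq : τ = D.s i * D.wordProd (l.erase i) := by rw [← hprod, hw]
  have him : i ∉ l.erase i := hnd.not_mem_erase
  have hmnd : (l.erase i).Nodup := hnd.erase i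
  have hcount1 : ∀ k, k ≠ i → (l.erase i).count k = 1 := by
    intro k hk
    rw [List.count_erase_of_ne hk]
    exact List.count_eq_one_of_mem hnd (hfull k)
  have hcounti : (l.erase i).count i = 0 := List.count_eq_zero.mpr him
  have hfull' : ∀ k, k ∈ l.erase i ++ [i] := by
    intro k
    by_cases hk : k = i
    · subst hk; simp
    · exact List.mem_append.mpr (Or.inl ((List.mem_erase_of_ne hk).mpr (hfull k)))
  have hnd' : (l.erase i ++ [i]).Nodup := by
    rw [List.nodup_append]
    exact ⟨hmnd, List.nodup_singleton i, by simpa using fun (a : D.I) (ha : a ∈ l.erase i) (h : a = i) => him (h ▸ ha)⟩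
  have hadapt' : D.Adapted (D.rHeight ξ i) (l.erase i ++ [i]) := by
    rw [D.adapted_append]
    refine ⟨hada, ?_, trivial⟩
    intro k hk
    have hik : i ≠ k := by
      intro h
      subst h
      have hk' : D.graph.dist i i = 1 := hk
      rw [SimpleGraph.dist_self] at hk'
      omega
    have hsrc := hi k hk
    have c1 := hcount1 k (Ne.symm hik)
    rw [D.rHs_count, D.rHs_count, D.rHeight_eq, D.rHeight_eq, if_pos rfl,
      if_neg (Ne.symm hik), hcounti, c1]
    omega
  have hprod' : τ' = D.wordProd (l.erase i) * D.s i := by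
    obtain ⟨l', hnd'', hfull'', hadapt'', hprod''⟩ := id hτ'
    have hperm : l'.Perm (l.erase i ++ [i]) :=
      (List.perm_ext_iff_of_nodup hnd'' hnd').mpr
        (fun a => ⟨fun _ => hfull' a, fun _ => hfull'' a⟩)
    rw [← hprod'', D.adapted_perm (l.erase i ++ [i]) l' _ hperm hadapt'' hadapt',
      D.wp_append, D.wp_cons, D.wp_nil, mul_one]
  have hss : ∀ y, D.s i (D.s i y) = y := D.s_s i
  have hsinv : (D.s i)⁻¹ = D.s i := D.s_inv i
  have hτinv : τ⁻¹ = (D.wordProd (l.erase i))⁻¹ * D.s i := by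
    rw [hτeq, mul_inv_rev, hsinv]
  have hτ'inv : τ'⁻¹ = D.s i * (D.wordProd (l.erase i))⁻¹ := by
    rw [hprod', mul_inv_rev, hsinv]
  have hts : ∀ y, τ' (D.s i y) = D.s i (τ y) := by
    intro y
    rw [hτeq, hprod']
    simp only [mulApp, hss]
  have hts' : ∀ y, τ'⁻¹ (D.s i y) = D.s i (τ⁻¹ y) := by
    intro y
    rw [hτinv, hτ'inv]
    simp only [mulApp, hss]
  have hwinv : (D.wordProd (l.erase i))⁻¹ = D.wordProd (l.erase i).reverse :=
    (D.wp_reverse (l.erase i)).symm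
  have hRτ : ∀ y, D.InR y → D.InR (τ y) := by
    intro y h
    rw [hτeq, mulApp]
    exact D.s_inR i (D.wp_inR _ h)
  have hRτi : ∀ y, D.InR y → D.InR (τ⁻¹ y) := by
    intro y h
    rw [hτinv, mulApp, hwinv]
    exact D.wp_inR _ (D.s_inR i h)
  have hwα : D.wordProd (l.erase i) (D.α i) ∈ D.Φ := D.wp_alpha_mem _ i him
  have hwαinv : (D.wordProd (l.erase i))⁻¹ (D.α i) ∈ D.Φ := by
    rw [hwinv]
    exact D.wp_alpha_mem _ i (by simpa using him)
  have hταi : τ⁻¹ (D.α i) = -((D.wordProd (l.erase i))⁻¹ (D.α i)) := by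
    rw [hτinv, mulApp, D.s_alpha_self, map_neg]
  have E1 : ∀ β ∈ D.Φ, τ β ∈ D.Φ → D.s i (τ β) ∈ D.Φ := by
    intro β hβ hτβ
    by_cases h : τ β = D.α i
    · exfalso
      have hβeq : β = τ⁻¹ (D.α i) := by rw [← h, D.invApp]
      rw [hταi] at hβeq
      exact D.not_neg_mem hwαinv (hβeq ▸ hβ)
    · exact D.s_perm i (τ β) hτβ h
  have E2 : ∀ β ∈ D.Φ, D.s i β ∉ D.Φ → D.s i (τ β) ∈ D.Φ := by
    intro β hβ hsb
    have hβα : β = D.α i := by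
      by_contra h
      exact hsb (D.s_perm i β hβ h)
    rw [hβα, hτeq, mulApp, hss]
    exact hwα
  have E3 : ∀ β ∈ D.Φ, τ⁻¹ β ∈ D.Φ → D.s i β ∈ D.Φ := by
    intro β hβ hτβ
    by_cases h : β = D.α i
    · exfalso
      rw [h, hταi] at hτβ
      exact D.not_neg_mem hwαinv hτβ
    · exact D.s_perm i β hβ h
  have E4 : ∀ β ∈ D.Φ, D.s i β ∈ D.Φ → D.s i (τ⁻¹ β) ∈ D.Φ → τ⁻¹ β ∈ D.Φ := by
    intro β hβ hb hc
    by_contra ha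
    have hneg : -(τ⁻¹ β) ∈ D.Φ := D.neg_mem_of_inR (hRτi β (Or.inl hβ)) ha
    have h2 : -(τ⁻¹ β) = D.α i := by
      by_contra h
      have := D.s_perm i _ hneg h
      rw [map_neg] at this
      exact D.not_neg_mem hc this
    have h3 : τ⁻¹ β = -(D.α i) := by
      have := congrArg Neg.neg h2
      simpa using this
    have hβ2 : β = -(D.s i (D.wordProd (l.erase i) (D.α i))) := by
      calc β = τ (τ⁻¹ β) := (D.appInv τ β).symm
      _ = τ (-(D.α i)) := by rw [h3]
      _ = -(τ (D.α i)) := by rw [map_neg]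
      _ = -(D.s i (D.wordProd (l.erase i) (D.α i))) := by rw [hτeq, mulApp]
    by_cases hcase : D.wordProd (l.erase i) (D.α i) = D.α i
    · rw [hcase, D.s_alpha_self, neg_neg] at hβ2
      rw [hβ2, D.s_alpha_self] at hb
      exact D.not_neg_mem (D.alpha_mem i) hb
    · have hmem : D.s i (D.wordProd (l.erase i) (D.α i)) ∈ D.Φ :=
        D.s_perm i _ hwα hcase
      rw [hβ2] at hβ
      exact D.not_neg_mem hmem hβ
  have CHiter : ∀ (n : ℕ) (x : D.V × ℤ), x.1 ∈ D.Φ →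
      D.hatInv (D.s i) ((D.hat τ)^[n] x) = (D.hat τ')^[n] (D.hatInv (D.s i) x) :=
    fun n x hx => D.comm_hat_iter i τ τ' hts hRτ E1 E2 n x hx
  have CIiter : ∀ (n : ℕ) (x : D.V × ℤ), x.1 ∈ D.Φ →
      D.hatInv (D.s i) ((D.hatInv τ)^[n] x) = (D.hatInv τ')^[n] (D.hatInv (D.s i) x) :=
    fun n x hx => D.comm_hatInv_iter i τ τ' hts' hRτi E3 E4 n x hx
  have hγi : D.gam τ i = D.α i := by
    rw [gam, hτeq, mulApp, D.wp_fix _ i him, D.s_omega, if_pos rfl, one_smul]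
    abel
  have hγ'i : D.gam τ' i = D.wordProd (l.erase i) (D.α i) := by
    rw [gam, hprod', mulApp, D.s_omega, if_pos rfl, one_smul, map_sub,
      D.wp_fix _ i him]
    abel
  intro j p hdvd
  by_cases hji : j = i
  · -- the case j = i
    subst hji
    have hξ'j : D.rHeight ξ j j = ξ j - 2 := by rw [D.rHeight_eq, if_pos rfl]
    have P1 : D.hatInv (D.s j) (D.hat τ (D.α j, 0)) =
        (D.wordProd (l.erase j) (D.α j), 0) := by
      by_cases hcase : D.wordProd (l.erase j) (D.α j) = D.α j
      · have h1 : τ (D.α j) ∉ D.Φ := by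
          rw [hτeq, mulApp, hcase, D.s_alpha_self]
          exact D.not_neg_mem (D.alpha_mem j)
        have h2 : τ (D.α j) = -(D.α j) := by
          rw [hτeq, mulApp, hcase, D.s_alpha_self]
        rw [D.hat_eq_neg τ _ 0 h1, h2, neg_neg, D.hatInv_s_neg j _ (0 - 1)
          (by rw [D.s_alpha_self]; exact D.not_neg_mem (D.alpha_mem j)),
          D.s_alpha_self, neg_neg, hcase]
        norm_num
      · have hταΦ : τ (D.α j) ∈ D.Φ := by
          rw [hτeq, mulApp]
          exact D.s_perm j _ hwα hcase
        rw [D.hat_eq_pos τ _ 0 hταΦ, D.hatInv_s_pos j _ 0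
          (by rw [hτeq, mulApp, hss]; exact hwα), hτeq, mulApp, hss]
    have P2 : D.hatInv τ' (D.wordProd (l.erase j) (D.α j), 0) = (D.α j, 1) := by
      have h1 : τ'⁻¹ (D.wordProd (l.erase j) (D.α j)) = -(D.α j) := by
        rw [hτ'inv, mulApp]
        rw [D.invApp, D.s_alpha_self]
      rw [D.hatInv_eq_neg τ' _ 0 (by rw [h1]; exact D.not_neg_mem (D.alpha_mem j)),
        h1, neg_neg]
      norm_num
    have P3 : D.hatInv (D.s j) (D.α j, 0) = (D.α j, 1) := by
      rw [D.hatInv_s_neg j _ 0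
        (by rw [D.s_alpha_self]; exact D.not_neg_mem (D.alpha_mem j)),
        D.s_alpha_self, neg_neg]
      norm_num
    obtain ⟨kk, hkk⟩ := hdvd
    by_cases hkneg : kk < 0
    · obtain ⟨n, rfl⟩ : ∃ n : ℕ, kk = -((n : ℤ) + 1) := ⟨(-kk - 1).toNat, by omega⟩
      have e1 : ((ξ j - p) / 2).toNat = n + 1 := by omega
      have e2 : ((ξ j - 2 - p) / 2).toNat = n := by omega
      simp only [phi]
      rw [hξ'j, if_pos (by omega), if_pos (by omega), hγi, hγ'i, e1, e2,
        Function.iterate_succ_apply,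
        CHiter n _ (D.hat_fst_mem hRτ (D.alpha_mem j)), P1]
    · have hkpos : 0 ≤ kk := by omega
      obtain ⟨n, rfl⟩ : ∃ n : ℕ, kk = (n : ℤ) := ⟨kk.toNat, by omega⟩
      have hφ : D.phi ξ τ j p = (D.hatInv τ)^[n] (D.α j, 0) := by
        simp only [phi]
        rw [hγi]
        by_cases h : p ≤ ξ j
        · have hp0 : p = ξ j := by omega
          have hn0 : n = 0 := by omega
          rw [if_pos h, hp0, hn0]
          simp
        · rw [if_neg h]
          have : ((p - ξ j) / 2).toNat = n := by omega
          rw [this]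
      have hφ' : D.phi (D.rHeight ξ j) τ' j p =
          (D.hatInv τ')^[n] (D.α j, 1) := by
        simp only [phi]
        rw [hξ'j, if_neg (by omega), hγ'i]
        have : ((p - (ξ j - 2)) / 2).toNat = n + 1 := by omega
        rw [this, Function.iterate_succ_apply, P2]
      rw [hφ, hφ', CIiter n _ (D.alpha_mem j), P3]
  · -- the case j ≠ i
    have hγj : D.gam τ j ∈ D.Φ := D.gam_mem hτ j
    have hγ'j : D.gam τ' j ∈ D.Φ := D.gam_mem hτ' j
    have hγ'ne : D.gam τ' j = D.s i (D.gam τ j) := by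
      have hij : ¬ i = j := fun h => hji h.symm
      have hsw : D.s i (D.ϖ j) = D.ϖ j := by
        rw [D.s_omega, if_neg hij, zero_smul, sub_zero]
      simp only [gam, hprod', hτeq, mulApp, map_sub, hss, hsw]
    have hξ'j : D.rHeight ξ i j = ξ j := by
      rw [D.rHeight_eq, if_neg hji]
      ring
    have hbase : D.hatInv (D.s i) (D.gam τ j, 0) = (D.gam τ' j, 0) := by
      rw [D.hatInv_s_pos i _ 0 (by rw [← hγ'ne]; exact hγ'j), ← hγ'ne]
    simp only [phi]
    rw [hξ'j]
    by_cases hp : p ≤ ξ j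
    · rw [if_pos hp, if_pos hp, CHiter _ _ hγj, hbase]
    · rw [if_neg hp, if_neg hp, CIiter _ _ hγj, hbase]

end SSDatum

/-- Let `i` be a source of a Dynkin quiver `Q` on `Δ`. Then
`φ_{s_iQ} = (ŝ_i)⁻¹ ∘ φ_Q` as maps `Δ̂₀ → Φ⁺ × ℤ`. -/
theorem stmt3 (D : SSDatum) (ξ : D.I → ℤ) (hξ : D.IsHeight ξ)
    (i : D.I) (hi : D.IsSource ξ i)
    (τ τ' : D.V ≃ₗ[ℚ] D.V)
    (hτ : D.IsCoxeterFor ξ τ) (hτ' : D.IsCoxeterFor (D.rHeight ξ i) τ') :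
    ∀ (j : D.I) (p : ℤ), 2 ∣ (p - ξ j) →
      D.phi (D.rHeight ξ i) τ' j p = D.hatInv (D.s i) (D.phi ξ τ j p) :=
  SSDatum.stmt3_aux D ξ hξ i hi τ τ' hτ hτ'
end
end

section
/- For all i,j ∈ I and all u ∈ ℤ with u ≤ d(i,j), one has b̃_{i,j}(u) = 0. -/
noncomputable section

open scoped BigOperators

section Aux

open HahnSeries

lemma aux_mul_tq_coeff (x : LaurentSeries ℚ) (w : ℤ) :
    (x * tq).coeff w = x.coeff (w - 1) := by
  have h : (x * HahnSeries.single (1:ℤ) (1:ℚ)).coeff (w - 1 + 1) = x.coeff (w-1) * 1 :=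
    HahnSeries.coeff_mul_single_add
  simpa [tq] using h

lemma aux_tq_inv : (tq)⁻¹ = HahnSeries.single (-1 : ℤ) (1 : ℚ) := by
  apply inv_eq_of_mul_eq_one_right
  rw [tq, HahnSeries.single_mul_single]
  norm_num [HahnSeries.single_zero_one]

lemma aux_mul_tq_inv_coeff (x : LaurentSeries ℚ) (w : ℤ) :
    (x * tq⁻¹).coeff w = x.coeff (w + 1) := by
  rw [aux_tq_inv]
  have h : (x * HahnSeries.single (-1:ℤ) (1:ℚ)).coeff (w + 1 + -1) = x.coeff (w+1) * 1 :=
    HahnSeries.coeff_mul_single_add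
  simpa using h

lemma aux_int_cast (n : ℤ) :
    ((n : ℤ) : LaurentSeries ℚ) = HahnSeries.C ((n : ℚ)) :=
  (map_intCast (HahnSeries.C : ℚ →+* LaurentSeries ℚ) n).symm

lemma aux_C_inv (x : ℚ) (hx : x ≠ 0) :
    (HahnSeries.C x : LaurentSeries ℚ)⁻¹ = HahnSeries.C x⁻¹ := by
  apply inv_eq_of_mul_eq_one_right
  rw [← map_mul, mul_inv_cancel₀ hx, map_one]

lemma aux_coeff_sum {ι : Type*} (s : Finset ι) (f : ι → LaurentSeries ℚ) (v : ℤ) :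
    (∑ k ∈ s, f k).coeff v = ∑ k ∈ s, (f k).coeff v :=
  map_sum (HahnSeries.coeff.addMonoidHom v) f s

end Aux

/-- For all `i,j ∈ I` and all `u ∈ ℤ` with `u ≤ d(i,j)`,
one has `b̃_{i,j}(u) = 0`. -/
theorem stmt14 (D : SSDatum) (hdet : IsUnit D.Bt.det)
    (i j : D.I) (u : ℤ) (hu : u ≤ (D.dist i j : ℤ)) :
    D.btilde i j u = 0 := by
  classical
  have hA : D.Bt⁻¹ * D.Bt = 1 := Matrix.nonsing_inv_mul _ hdet
  -- the graph is connected
  have hconn : D.graph.Connected := by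
    refine ⟨fun a b => ?_⟩
    rw [SimpleGraph.reachable_iff_reflTransGen]
    exact D.connected a b
  -- nonvanishing of d
  have hd : ∀ k : D.I, ((D.d k : ℚ)) ≠ 0 := by
    intro k
    have := D.d_pos k
    exact_mod_cast (by positivity : (D.d k : ℚ) ≠ 0)
  -- the key coefficient recurrence
  have hsum : ∀ (j' : D.I) (v : ℤ),
      (D.btilde i j' (v-1) + D.btilde i j' (v+1)) * ((D.d j' : ℚ))⁻¹
        + ∑ k ∈ Finset.univ.erase j', D.btilde i k v * ((D.c k j' : ℚ) * ((D.d j' : ℚ))⁻¹)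
      = if i = j' ∧ v = 0 then 1 else 0 := by
    intro j' v
    set r : ℚ := ((D.d j' : ℚ))⁻¹ with hr
    have h0 : ((D.d j' : ℤ) : LaurentSeries ℚ)⁻¹ = HahnSeries.C r := by
      rw [aux_int_cast, aux_C_inv _ (hd j')]
    have h1 : ∑ k, D.Bt⁻¹ i k * D.Bt k j' = if i = j' then 1 else 0 := by
      have h := congrFun (congrFun hA i) j'
      rwa [Matrix.mul_apply, Matrix.one_apply] at h
    have h2 := congrArg (fun x : LaurentSeries ℚ => x.coeff v) h1
    beta_reduce at h2
    rw [← Finset.add_sum_erase _ _ (Finset.mem_univ j'), HahnSeries.coeff_add,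
      aux_coeff_sum] at h2
    have tj : (D.Bt⁻¹ i j' * D.Bt j' j').coeff v
        = (D.btilde i j' (v-1) + D.btilde i j' (v+1)) * r := by
      have hb : D.Bt j' j' = (tq + tq⁻¹) * HahnSeries.C r := by
        simp [SSDatum.Bt, h0]
      rw [hb, ← mul_assoc, HahnSeries.C_apply, HahnSeries.coeff_mul_single_zero,
        mul_add, HahnSeries.coeff_add, aux_mul_tq_coeff, aux_mul_tq_inv_coeff]
      rfl
    have tk : ∀ k ∈ Finset.univ.erase j',
        (D.Bt⁻¹ i k * D.Bt k j').coeff v = D.btilde i k v * ((D.c k j' : ℚ) * r) := by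
      intro k hk
      have hkj : k ≠ j' := Finset.ne_of_mem_erase hk
      have hb : D.Bt k j' = HahnSeries.C ((D.c k j' : ℚ) * r) := by
        show (if k = j' then tq + tq⁻¹ else ((D.c k j' : ℤ) : LaurentSeries ℚ))
            * ((D.d j' : ℤ) : LaurentSeries ℚ)⁻¹ = _
        rw [if_neg hkj, h0, aux_int_cast, ← map_mul]
      rw [hb, HahnSeries.C_apply, HahnSeries.coeff_mul_single_zero]
      rfl
    rw [tj, Finset.sum_congr rfl tk] at h2
    rw [h2]
    by_cases hij : i = j' <;> by_cases hv : v = 0 <;>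
      simp [hij, hv, HahnSeries.coeff_one]
  -- there is a uniform lower bound below which all coefficients vanish
  obtain ⟨M, hM⟩ : ∃ M : ℤ, ∀ (k : D.I) (v : ℤ), v < M → D.btilde i k v = 0 := by
    have hex : ∀ k : D.I, ∃ m : ℤ, ∀ v : ℤ, v < m → D.btilde i k v = 0 := by
      intro k
      by_cases h : (D.Bt⁻¹ i k) = 0
      · exact ⟨0, fun v _ => by simp [SSDatum.btilde, h]⟩
      · exact ⟨(D.Bt⁻¹ i k).order, fun v hv => HahnSeries.coeff_eq_zero_of_lt_order hv⟩
    choose m hm using hex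
    refine ⟨Finset.univ.inf' Finset.univ_nonempty m, fun k v hv =>
      hm k v (lt_of_lt_of_le hv (Finset.inf'_le _ (Finset.mem_univ k)))⟩
  -- distance estimate for neighbors
  have hstep : ∀ (k j' : D.I), k ≠ j' → D.c k j' ≠ 0 →
      (D.dist i j' : ℤ) ≤ (D.dist i k : ℤ) + 1 := by
    intro k j' hkj hc
    have hadj : D.graph.Adj k j' := ⟨hkj, hc⟩
    have h1 : D.graph.dist i j' ≤ D.graph.dist i k + D.graph.dist k j' :=
      hconn.dist_triangle
    have h2 : D.graph.dist k j' ≤ 1 := by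
      simpa using SimpleGraph.dist_le hadj.toWalk
    have : D.graph.dist i j' ≤ D.graph.dist i k + 1 := by omega
    unfold SSDatum.dist
    exact_mod_cast this
  -- main induction
  have key : ∀ (n : ℕ) (j' : D.I) (w : ℤ), w ≤ (D.dist i j' : ℤ) → w < M + n →
      D.btilde i j' w = 0 := by
    intro n
    induction n with
    | zero => intro j' w _ hw; exact hM j' w (by omega)
    | succ n ih =>
      intro j' w hw1 hw2
      by_cases hlt : w < M + n
      · exact ih j' w hw1 hlt
      have hwn : w = M + n := by omega
      have h := hsum j' (w - 1)
      have hz1 : D.btilde i j' (w - 1 - 1) = 0 := by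
        apply ih j' _ (by omega) (by omega)
      have hz2 : ∑ k ∈ Finset.univ.erase j',
          D.btilde i k (w-1) * ((D.c k j' : ℚ) * ((D.d j' : ℚ))⁻¹) = 0 := by
        apply Finset.sum_eq_zero
        intro k hk
        by_cases hc : D.c k j' = 0
        · simp [hc]
        · have hkj : k ≠ j' := Finset.ne_of_mem_erase hk
          have hdist := hstep k j' hkj hc
          have : D.btilde i k (w - 1) = 0 := ih k (w-1) (by omega) (by omega)
          simp [this]
      have hif : (if i = j' ∧ (w - 1) = 0 then (1:ℚ) else 0) = 0 := by
        rw [if_neg]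
        rintro ⟨rfl, hw0⟩
        have : D.dist i i = 0 := by
          unfold SSDatum.dist; exact SimpleGraph.dist_self
        rw [this] at hw1
        omega
      rw [hz1, hz2, hif, zero_add, add_zero] at h
      have hne : ((D.d j' : ℚ))⁻¹ ≠ 0 := inv_ne_zero (hd j')
      have hb : D.btilde i j' (w - 1 + 1) = 0 := by
        rcases mul_eq_zero.mp h with h' | h'
        · exact h'
        · exact absurd h' hne
      simpa using hb
  have hsel : (u - M + 1).toNat ≥ u - M + 1 := Int.self_le_toNat _
  exact key (u - M + 1).toNat j u hu (by omega)
end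
end
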